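/- Let m ≥ 6 be an even integer and let q = 2^m. Then there exists x ∈ F_q such that the element x·(1 + x)·(1 + x + x²) is not a cube in F_q. -/

import Mathlib

open Polynomial Module

theorem exists_not_cube (m : ℕ) (hm : 6 ≤ m) (hme : Even m) :
    ∃ x : GaloisField 2 m,
      ¬ ∃ t : GaloisField 2 m, t ^ 3 = x * (1 + x) * (1 + x + x ^ 2) := by
  by_contra hcon
  push_neg at hcon
  set F := GaloisField 2 m with hF
  letI := Classical.decEq F
  have hm0 : m ≠ 0 := by omega
  have hcard : Nat.card F = 2 ^ m := GaloisField.card 2 m hm0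
  have char2 : (2 : F) = 0 := by
    exact_mod_cast CharP.cast_eq_zero F 2
  -- key algebraic identity
  have hid : ∀ x : F, x * (1 + x) * (1 + x + x ^ 2) = x ^ 4 + x := by
    intro x
    linear_combination (x ^ 2 + x ^ 3) * char2
  -- 3 divides q - 1
  obtain ⟨k, hk⟩ := hme
  have hdvd : 3 ∣ 2 ^ m - 1 := by
    have : 2 ^ m = 4 ^ k := by rw [hk, ← two_mul, pow_mul]; norm_num
    rw [this]
    simpa using Nat.sub_dvd_pow_sub_pow 4 1 k
  -- a primitive cube root of unity / a non-cube unit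
  have hq1 : Nat.card Fˣ = 2 ^ m - 1 := by
    rw [Nat.card_units, hcard]
  obtain ⟨g, hg⟩ := IsCyclic.exists_generator (α := Fˣ)
  have horder : orderOf g = 2 ^ m - 1 := by
    rw [orderOf_eq_card_of_forall_mem_zpowers hg, hq1]
  have hq1pos : 0 < 2 ^ m - 1 := by
    have : 2 ^ 6 ≤ 2 ^ m := Nat.pow_le_pow_right (by norm_num) hm
    omega
  set ω : Fˣ := g ^ ((2 ^ m - 1) / 3) with hω
  have hord3 : orderOf ω = 3 := by
    rw [hω, orderOf_pow, horder, Nat.gcd_eq_right (Nat.div_dvd_of_dvd hdvd),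
      Nat.div_div_self hdvd (by omega)]
  have hω1 : ω ≠ 1 := by
    intro h
    rw [h, orderOf_one] at hord3
    omega
  -- cube map on units is not surjective
  have hnotsurj : ¬ Function.Surjective (fun t : Fˣ => t ^ 3) := by
    intro hsurj
    have hinj : Function.Injective (fun t : Fˣ => t ^ 3) :=
      Finite.injective_iff_surjective.mpr hsurj
    have : ω = 1 := hinj (by simp [← hord3, pow_orderOf_eq_one])
    exact hω1 this
  obtain ⟨U, hU⟩ := not_forall.mp hnotsurj
  push_neg at hU
  set u : F := (U : F) with hu
  have hu0 : u ≠ 0 := Units.ne_zero U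
  have hu_noncube : ∀ t : F, t ^ 3 ≠ u := by
    intro t ht
    have ht0 : t ≠ 0 := by
      intro h; rw [h] at ht; simp at ht; exact hu0 ht.symm
    have : (Units.mk0 t ht0) ^ 3 = U := by
      ext; push_cast; exact ht
    exact hU _ this
  -- the additive (ZMod 2-linear) map x ↦ x^4 + x
  have h2 : ∀ a b : F, (a + b) ^ 2 = a ^ 2 + b ^ 2 := fun a b => CharTwo.add_sq a b
  have h4 : ∀ a b : F, (a + b) ^ 4 = a ^ 4 + b ^ 4 := by
    intro a b
    calc (a + b) ^ 4 = ((a + b) ^ 2) ^ 2 := by ring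
      _ = (a ^ 2 + b ^ 2) ^ 2 := by rw [h2]
      _ = (a ^ 2) ^ 2 + (b ^ 2) ^ 2 := h2 _ _
      _ = a ^ 4 + b ^ 4 := by ring
  set φ : F →ₗ[ZMod 2] F :=
    { toFun := fun x => x ^ 4 + x
      map_add' := by
        intro x y
        simp only [h4]
        ring
      map_smul' := by
        intro c x
        fin_cases c <;> simp <;> [exact (by change ((0 : ZMod 2) • x) ^ 4 + (0 : ZMod 2) • x = (0 : ZMod 2) • x ^ 4 + (0 : ZMod 2) • x; simp); exact (by change ((1 : ZMod 2) • x) ^ 4 + (1 : ZMod 2) • x = (1 : ZMod 2) • x ^ 4 + (1 : ZMod 2) • x; simp)] } with hφ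
  -- kernel of φ is small
  set P : F[X] := X ^ 4 + X with hP
  have hPmonic : P.Monic := by
    rw [hP]
    apply Polynomial.monic_X_pow_add
    apply lt_of_le_of_lt Polynomial.degree_X_le
    norm_num
  have hPne : P ≠ 0 := hPmonic.ne_zero
  have hPdeg : P.natDegree = 4 := by
    rw [hP]
    compute_degree!
  have hker_sub : (LinearMap.ker φ : Set F) ⊆ ↑P.roots.toFinset := by
    intro x hx
    simp only [SetLike.mem_coe, LinearMap.mem_ker] at hx
    simp only [Finset.coe_sort_coe, Finset.mem_coe, Multiset.mem_toFinset,
      Polynomial.mem_roots, hPne, ne_eq, not_false_eq_true, true_and]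
    show P.IsRoot x
    simp only [hP, Polynomial.IsRoot, Polynomial.eval_add, Polynomial.eval_pow,
      Polynomial.eval_X]
    exact hx
  have hker_card : Nat.card (LinearMap.ker φ) ≤ 4 := by
    calc Nat.card (LinearMap.ker φ) = (LinearMap.ker φ : Set F).ncard :=
          Nat.card_coe_set_eq _
      _ ≤ (↑P.roots.toFinset : Set F).ncard :=
          Set.ncard_le_ncard hker_sub (P.roots.toFinset.finite_toSet)
      _ = P.roots.toFinset.card := Set.ncard_coe_finset _
      _ ≤ Multiset.card P.roots := Multiset.toFinset_card_le _
      _ ≤ P.natDegree := Polynomial.card_roots' P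
      _ = 4 := hPdeg
  -- dimension counting
  have hrankF : finrank (ZMod 2) F = m := GaloisField.finrank 2 hm0
  letI : Fintype F := Fintype.ofFinite F
  letI : Fintype ↥(LinearMap.ker φ) := Fintype.ofFinite _
  have hker_dim : finrank (ZMod 2) (LinearMap.ker φ) ≤ 2 := by
    have hcardker : Nat.card (LinearMap.ker φ)
        = 2 ^ finrank (ZMod 2) (LinearMap.ker φ) := by
      rw [Nat.card_eq_fintype_card]
      have := card_eq_pow_finrank (K := ZMod 2) (V := LinearMap.ker φ)
      rwa [ZMod.card] at this
    rw [hcardker] at hker_card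
    by_contra h
    push_neg at h
    have : 2 ^ 3 ≤ 2 ^ finrank (ZMod 2) (LinearMap.ker φ) :=
      Nat.pow_le_pow_right (by norm_num) h
    omega
  have hrange_dim : m - 2 ≤ finrank (ZMod 2) (LinearMap.range φ) := by
    have := LinearMap.finrank_range_add_finrank_ker φ
    rw [hrankF] at this
    omega
  -- the translated subspace
  set V := LinearMap.range φ with hV
  have hmul_inj : Function.Injective (LinearMap.mulLeft (ZMod 2) u) := by
    intro a b hab
    simp only [LinearMap.mulLeft_apply] at hab
    exact mul_left_cancel₀ hu0 hab
  set W := V.map (LinearMap.mulLeft (ZMod 2) u) with hW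
  have hW_dim : finrank (ZMod 2) W = finrank (ZMod 2) V :=
    (LinearEquiv.finrank_eq (Submodule.equivMapOfInjective _ hmul_inj V)).symm
  have hinf : 0 < finrank (ZMod 2) (V ⊓ W : Submodule (ZMod 2) F) := by
    have hsum := Submodule.finrank_sup_add_finrank_inf_eq V W
    have hle : finrank (ZMod 2) (V ⊔ W : Submodule (ZMod 2) F) ≤ m := by
      have := Submodule.finrank_le (V ⊔ W)
      rwa [hrankF] at this
    omega
  have hne_bot : (V ⊓ W : Submodule (ZMod 2) F) ≠ ⊥ := by
    intro h
    rw [h, finrank_bot] at hinf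
    omega
  obtain ⟨w, hwmem, hw0⟩ := (Submodule.ne_bot_iff _).mp hne_bot
  obtain ⟨hwV, hwW⟩ := Submodule.mem_inf.mp hwmem
  -- w is a cube
  obtain ⟨x, hx⟩ := hwV
  obtain ⟨t, ht⟩ := hcon x
  have htw : t ^ 3 = w := by
    rw [ht, hid x]
    exact hx
  -- w = u * v with v a nonzero cube
  obtain ⟨v, hvV, hvw⟩ := Submodule.mem_map.mp hwW
  simp only [LinearMap.mulLeft_apply] at hvw
  obtain ⟨y, hy⟩ := hvV
  obtain ⟨s, hs⟩ := hcon y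
  have hsv : s ^ 3 = v := by
    rw [hs, hid y]
    exact hy
  have hv0 : v ≠ 0 := by
    intro h
    rw [h, mul_zero] at hvw
    exact hw0 hvw.symm
  have hs0 : s ≠ 0 := by
    intro h
    rw [h] at hsv
    simp at hsv
    exact hv0 hsv.symm
  -- then u is a cube, contradiction
  apply hu_noncube (t * s⁻¹)
  have : u = w * v⁻¹ := by
    rw [← hvw, mul_inv_cancel_right₀ hv0]
  rw [this, ← htw, ← hsv]
  field_simp
  ring
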